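/- Let C ⊆ ℝⁿ be a nonempty closed convex set, f : ℝⁿ → ℝ be continuously differentiable with ∇f L-Lipschitz on C (L > 0), and let (x^k), (p^k), (v_k) be Frank–Wolfe sequences for f on C with v_k < 0 for all k. Suppose σ > 0 satisfies ‖p^k − x^k‖ ≤ σ for all k, γ > 0 satisfies ‖∇f(x^k)‖ ≤ γ for all k, and set Γ := min{1/(2γσ), 1/(2Lσ²)}. Then Γ·v_k² ≤ f(x^k) − f(x^{k+1}) for all k = 0, 1, …. -/

import Mathlib

open scoped RealInnerProductSpace

private lemma hasDerivAt_line {n : ℕ} (f : EuclideanSpace ℝ (Fin n) → ℝ)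
    (hf : ContDiff ℝ 1 f) (a d : EuclideanSpace ℝ (Fin n)) (t : ℝ) :
    HasDerivAt (fun s : ℝ => f (a + s • d)) ⟪gradient f (a + t • d), d⟫ t := by
  have hline : HasDerivAt (fun s : ℝ => a + s • d) d t := by
    simpa using ((hasDerivAt_id t).smul_const d).const_add a
  have hdiff : DifferentiableAt ℝ f (a + t • d) :=
    (hf.differentiable one_ne_zero) _
  have hgrad := hdiff.hasGradientAt
  have hF : HasFDerivAt f (InnerProductSpace.toDual ℝ _ (gradient f (a + t • d)))
      (a + t • d) := hgrad.hasFDerivAt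
  have := hF.comp_hasDerivAt t hline
  simp only [InnerProductSpace.toDual_apply_apply] at this
  exact this

/-- Descent lemma along a segment on which the gradient is Lipschitz. -/
private lemma descent_lemma {n : ℕ} (f : EuclideanSpace ℝ (Fin n) → ℝ)
    (hf : ContDiff ℝ 1 f) (a d : EuclideanSpace ℝ (Fin n)) (L : ℝ) (hL : 0 < L)
    (hlip : ∀ t ∈ Set.Icc (0:ℝ) 1,
      ‖gradient f (a + t • d) - gradient f a‖ ≤ L * ‖t • d‖) :
    f (a + d) ≤ f a + ⟪gradient f a, d⟫ + L / 2 * ‖d‖ ^ 2 := by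
  set c : ℝ := ⟪gradient f a, d⟫
  set h : ℝ → ℝ := fun t => f (a + t • d) - t * c - L / 2 * t ^ 2 * ‖d‖ ^ 2 with hh
  have hderiv : ∀ t : ℝ, HasDerivAt h
      (⟪gradient f (a + t • d), d⟫ - c - L * t * ‖d‖ ^ 2) t := by
    intro t
    have h1 := hasDerivAt_line f hf a d t
    have h2 : HasDerivAt (fun s : ℝ => s * c) c t := by
      simpa using (hasDerivAt_id t).mul_const c
    have h3 : HasDerivAt (fun s : ℝ => L / 2 * s ^ 2 * ‖d‖ ^ 2)
        (L * t * ‖d‖ ^ 2) t := by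
      have := (hasDerivAt_pow 2 t).const_mul (L / 2)
      have := this.mul_const (‖d‖ ^ 2)
      refine this.congr_deriv ?_
      rw [show (2:ℕ) - 1 = 1 from rfl, pow_one, Nat.cast_ofNat]
      ring
    exact (h1.sub h2).sub h3
  have hanti : AntitoneOn h (Set.Icc (0:ℝ) 1) := by
    apply antitoneOn_of_deriv_nonpos (convex_Icc 0 1)
    · have hc : Continuous f := hf.continuous
      exact Continuous.continuousOn (by fun_prop)
    · intro t ht
      exact (hderiv t).differentiableAt.differentiableWithinAt
    · intro t ht
      rw [interior_Icc] at ht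
      rw [(hderiv t).deriv]
      have hmem : t ∈ Set.Icc (0:ℝ) 1 := ⟨le_of_lt ht.1, le_of_lt ht.2⟩
      have hb : ⟪gradient f (a + t • d) - gradient f a, d⟫ ≤ L * t * ‖d‖ ^ 2 := by
        calc ⟪gradient f (a + t • d) - gradient f a, d⟫
            ≤ ‖gradient f (a + t • d) - gradient f a‖ * ‖d‖ := real_inner_le_norm _ _
          _ ≤ (L * ‖t • d‖) * ‖d‖ := by
              apply mul_le_mul_of_nonneg_right (hlip t hmem) (norm_nonneg _)
          _ = L * t * ‖d‖ ^ 2 := by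
              rw [norm_smul, Real.norm_eq_abs, abs_of_nonneg ht.1.le]; ring
      have : ⟪gradient f (a + t • d), d⟫ - c = ⟪gradient f (a + t • d) - gradient f a, d⟫ := by
        simp [c, inner_sub_left]
      linarith
  have h10 : h 1 ≤ h 0 := hanti (by norm_num) (by norm_num) (by norm_num)
  simp only [hh] at h10
  simp only [one_smul, zero_smul, add_zero] at h10
  nlinarith [h10]

set_option maxHeartbeats 1600000 in
theorem frank_wolfe_key_inequality (n : ℕ) (C : Set (EuclideanSpace ℝ (Fin n)))
    (hCne : C.Nonempty) (hCcl : IsClosed C) (hCconv : Convex ℝ C)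
    (f : EuclideanSpace ℝ (Fin n) → ℝ) (hf : ContDiff ℝ 1 f)
    (L : ℝ) (hL : 0 < L)
    (hLip : ∀ a ∈ C, ∀ b ∈ C, ‖gradient f a - gradient f b‖ ≤ L * ‖a - b‖)
    (x p : ℕ → EuclideanSpace ℝ (Fin n)) (v : ℕ → ℝ)
    (hx0 : x 0 ∈ C) (hpC : ∀ k, p k ∈ C)
    (hpmin : ∀ k, ∀ q ∈ C, ⟪gradient f (x k), p k - x k⟫ ≤ ⟪gradient f (x k), q - x k⟫)
    (hv : ∀ k, v k = ⟪gradient f (x k), p k - x k⟫)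
    (hiter : ∀ k, x (k + 1) =
      x k + (min 1 (|v k| / (L * ‖p k - x k‖ ^ 2))) • (p k - x k))
    (hvneg : ∀ k, v k < 0)
    (σ : ℝ) (hσ : 0 < σ) (hσb : ∀ k, ‖p k - x k‖ ≤ σ)
    (γ : ℝ) (hγ : 0 < γ) (hγb : ∀ k, ‖gradient f (x k)‖ ≤ γ)
    (Γ : ℝ) (hΓ : Γ = min (1 / (2 * γ * σ)) (1 / (2 * L * σ ^ 2))) :
    ∀ k, Γ * v k ^ 2 ≤ f (x k) - f (x (k + 1)) := by
  have hlam_mem : ∀ k, min 1 (|v k| / (L * ‖p k - x k‖ ^ 2)) ∈ Set.Icc (0:ℝ) 1 := by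
    intro k
    refine ⟨le_min zero_le_one (div_nonneg (abs_nonneg _) (by positivity)), min_le_left _ _⟩
  have hseg : ∀ k, x k ∈ C → ∀ s ∈ Set.Icc (0:ℝ) 1, x k + s • (p k - x k) ∈ C := by
    intro k hk s hs
    have h := hCconv hk (hpC k) (a := 1 - s) (b := s) (by linarith [hs.2]) hs.1 (by ring)
    convert h using 1
    simp [smul_sub, sub_smul]
    abel
  have hxC : ∀ k, x k ∈ C := by
    intro k
    induction k with
    | zero => exact hx0
    | succ k ih =>
      rw [hiter k]
      exact hseg k ih _ (hlam_mem k)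
  intro k
  set g := gradient f (x k) with hg
  set d := p k - x k with hd
  set lam := min 1 (|v k| / (L * ‖d‖ ^ 2)) with hlam
  have hvk : v k = ⟪g, d⟫ := hv k
  have hneg : v k < 0 := hvneg k
  have hdne : d ≠ 0 := by
    intro h
    rw [hvk, h, inner_zero_right] at hneg
    exact lt_irrefl _ hneg
  have hdpos : 0 < ‖d‖ := norm_pos_iff.mpr hdne
  have hdσ : ‖d‖ ≤ σ := hσb k
  have habs : |v k| = -(v k) := abs_of_neg hneg
  have hlmem : lam ∈ Set.Icc (0:ℝ) 1 := hlam_mem k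
  -- descent lemma applied with direction lam • d
  have hdesc : f (x (k + 1)) ≤ f (x k) + ⟪g, lam • d⟫ + L / 2 * ‖lam • d‖ ^ 2 := by
    have hlip' : ∀ t ∈ Set.Icc (0:ℝ) 1,
        ‖gradient f (x k + t • (lam • d)) - gradient f (x k)‖ ≤ L * ‖t • (lam • d)‖ := by
      intro t ht
      have hmem : x k + (t * lam) • d ∈ C := by
        apply hseg k (hxC k) (t * lam)
        exact ⟨mul_nonneg ht.1 hlmem.1, mul_le_one₀ ht.2 hlmem.1 hlmem.2⟩
      have := hLip _ hmem _ (hxC k)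
      simpa [smul_smul, add_sub_cancel_left] using this
    have := descent_lemma f hf (x k) (lam • d) L hL hlip'
    rw [hiter k, ← hd, ← hlam]
    exact this
  have hinner : ⟪g, lam • d⟫ = lam * v k := by
    rw [hvk, real_inner_smul_right]
  have hnorm : ‖lam • d‖ ^ 2 = lam ^ 2 * ‖d‖ ^ 2 := by
    rw [norm_smul, Real.norm_eq_abs, abs_of_nonneg hlmem.1, mul_pow]
  have hkey : f (x k) - f (x (k + 1)) ≥ lam * (-(v k)) - L / 2 * lam ^ 2 * ‖d‖ ^ 2 := by
    rw [hinner, hnorm] at hdesc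
    nlinarith [hdesc]
  have hΓ1 : Γ ≤ 1 / (2 * γ * σ) := hΓ ▸ min_le_left _ _
  have hΓ2 : Γ ≤ 1 / (2 * L * σ ^ 2) := hΓ ▸ min_le_right _ _
  rcases le_or_gt (|v k| / (L * ‖d‖ ^ 2)) 1 with hc | hc
  · -- lam = |v|/(L‖d‖²)
    have hlameq : lam = -(v k) / (L * ‖d‖ ^ 2) := by
      rw [hlam, min_eq_right hc, habs]
    have hD : (0:ℝ) < L * ‖d‖ ^ 2 := by positivity
    have hdec : v k ^ 2 / (2 * L * ‖d‖ ^ 2) ≤ f (x k) - f (x (k + 1)) := by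
      rw [hlameq] at hkey
      have hLne : L ≠ 0 := ne_of_gt hL
      have hdne' : ‖d‖ ≠ 0 := ne_of_gt hdpos
      have heq : -v k / (L * ‖d‖ ^ 2) * -v k - L / 2 * (-v k / (L * ‖d‖ ^ 2)) ^ 2 * ‖d‖ ^ 2
          = v k ^ 2 / (2 * L * ‖d‖ ^ 2) := by
        field_simp
        ring
      linarith [hkey]
    have hmono : v k ^ 2 / (2 * L * σ ^ 2) ≤ v k ^ 2 / (2 * L * ‖d‖ ^ 2) := by
      apply div_le_div_of_nonneg_left (sq_nonneg _) (by positivity)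
      nlinarith [mul_nonneg (mul_nonneg hL.le (sub_nonneg.mpr hdσ)) (add_pos hσ hdpos).le]
    calc Γ * v k ^ 2 ≤ 1 / (2 * L * σ ^ 2) * v k ^ 2 :=
          mul_le_mul_of_nonneg_right hΓ2 (sq_nonneg _)
      _ = v k ^ 2 / (2 * L * σ ^ 2) := by ring
      _ ≤ v k ^ 2 / (2 * L * ‖d‖ ^ 2) := hmono
      _ ≤ f (x k) - f (x (k + 1)) := hdec
  · -- lam = 1 and L‖d‖² ≤ |v|
    have hlameq : lam = 1 := by
      rw [hlam, min_eq_left hc.le]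
    have hD : (0:ℝ) < L * ‖d‖ ^ 2 := by positivity
    have hDv : L * ‖d‖ ^ 2 ≤ -(v k) := by
      rw [lt_div_iff₀ hD, one_mul] at hc
      linarith [hc, habs.symm.le, habs.ge]
    have hdec : -(v k) / 2 ≤ f (x k) - f (x (k + 1)) := by
      rw [hlameq] at hkey
      rw [one_mul, one_pow] at hkey
      linarith [hkey, hDv]
    have hCS : -(v k) ≤ γ * σ := by
      have h1 : |v k| ≤ ‖g‖ * ‖d‖ := by rw [hvk]; exact abs_real_inner_le_norm g d
      have h2 : ‖g‖ * ‖d‖ ≤ γ * σ :=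
        mul_le_mul (hγb k) hdσ hdpos.le hγ.le
      linarith [habs ▸ h1]
    have hfinal : 1 / (2 * γ * σ) * v k ^ 2 ≤ -(v k) / 2 := by
      rw [div_mul_eq_mul_div, one_mul, div_le_div_iff₀ (by positivity) two_pos]
      nlinarith [mul_nonneg (neg_nonneg.mpr hneg.le) (sub_nonneg.mpr hCS)]
    calc Γ * v k ^ 2 ≤ 1 / (2 * γ * σ) * v k ^ 2 :=
          mul_le_mul_of_nonneg_right hΓ1 (sq_nonneg _)
      _ ≤ -(v k) / 2 := hfinal
      _ ≤ f (x k) - f (x (k + 1)) := hdec
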